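/- Let l ≥ 5. For every i with 3 < i ≤ l−1, the even endomorphism H_{ηᵢξᵢ₊₁} = L_{ξᵢ₊₁}∘∂_{ξᵢ} − L_{ηᵢ}∘∂_{ηᵢ₊₁} of Λ commutes with the odd endomorphism H_{η₁η₂η₃}: [H_{ηᵢξᵢ₊₁}, H_{η₁η₂η₃}] = 0. This realizes the relations {ξᵢηᵢ₊₁, η₁η₂η₃} = 0 for i > 3 between the generators of n₊ of o(2l) and the extra generator Y = H_{η₁η₂η₃} of h(0|2l) stated in the paper (§2.1.2). -/

import Mathlib

/-- The exterior algebra Λ of ℂ^{2l}, with generators indexed by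
`Fin l ⊕ Fin l` (left = ξ's, right = η's). -/
noncomputable abbrev Lam (l : ℕ) := ExteriorAlgebra ℂ ((Fin l ⊕ Fin l) → ℂ)

/-- The generator of Λ corresponding to index `a` (image of the standard basis). -/
noncomputable def gen (l : ℕ) (a : Fin l ⊕ Fin l) : Lam l :=
  ExteriorAlgebra.ι ℂ (Pi.single a 1)

/-- The generator ξᵢ. -/
noncomputable def xiv (l : ℕ) (i : Fin l) : Lam l := gen l (Sum.inl i)

/-- The generator ηᵢ. -/
noncomputable def etav (l : ℕ) (i : Fin l) : Lam l := gen l (Sum.inr i)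

/-- L_g : left exterior multiplication by g. -/
noncomputable def Lmul (l : ℕ) (g : Lam l) : Module.End ℂ (Lam l) :=
  LinearMap.mulLeft ℂ g

/-- `IsContraction l a D` says that `D` is the contraction ∂_ζ with the dual of
the generator ζ indexed by `a`: it kills 1, sends the generator indexed by `b`
to δ_{ab}·1, and satisfies ∂(xy) = ∂(x)y + (−1)ᵖ x ∂(y) whenever x is a product
of p generators. -/
def IsContraction (l : ℕ) (a : Fin l ⊕ Fin l) (D : Module.End ℂ (Lam l)) : Prop :=
  D 1 = 0 ∧
  (∀ b, D (gen l b) = if a = b then 1 else 0) ∧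
  (∀ (p : ℕ) (g : Fin p → (Fin l ⊕ Fin l)) (y : Lam l),
    D ((List.ofFn fun k => gen l (g k)).prod * y) =
      D ((List.ofFn fun k => gen l (g k)).prod) * y +
        ((-1 : ℂ) ^ p) • ((List.ofFn fun k => gen l (g k)).prod * D y))

/-- The Hamiltonian vector field H_f = Σᵢ (L_{∂_{ξᵢ}f} ∘ ∂_{ηᵢ} + L_{∂_{ηᵢ}f} ∘ ∂_{ξᵢ}),
realized as an endomorphism of Λ; `pd a` is the contraction operator ∂ with the
generator indexed by `a`. -/
noncomputable def Ham (l : ℕ) (pd : (Fin l ⊕ Fin l) → Module.End ℂ (Lam l))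
    (f : Lam l) : Module.End ℂ (Lam l) :=
  ∑ i : Fin l,
    (Lmul l (pd (Sum.inl i) f) ∘ₗ pd (Sum.inr i) +
     Lmul l (pd (Sum.inr i) f) ∘ₗ pd (Sum.inl i))

variable {l : ℕ} {pd : (Fin l ⊕ Fin l) → Module.End ℂ (Lam l)}

theorem leib (hpd : ∀ a, IsContraction l a (pd a)) (a b : Fin l ⊕ Fin l) (y : Lam l) :
    pd a (gen l b * y) = (if a = b then y else 0) - gen l b * pd a y := by
  have h := (hpd a).2.2 1 (fun _ => b) y
  simp only [List.ofFn_succ, List.ofFn_zero, List.prod_cons, List.prod_nil, mul_one,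
    pow_one, neg_smul, one_smul] at h
  rw [h, (hpd a).2.1 b]
  by_cases hab : a = b <;> simp [hab, sub_eq_add_neg]

theorem ivsum (v : (Fin l ⊕ Fin l) → ℂ) :
    ExteriorAlgebra.ι ℂ v = ∑ b, v b • gen l b := by
  have hv : v = ∑ b, v b • (Pi.single b (1:ℂ) : (Fin l ⊕ Fin l) → ℂ) := by
    funext c
    simp [Finset.sum_apply, Pi.single_apply]
  conv_lhs => rw [hv]
  simp only [map_sum, map_smul, gen]

theorem leibv (hpd : ∀ a, IsContraction l a (pd a)) (a : Fin l ⊕ Fin l)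
    (v : (Fin l ⊕ Fin l) → ℂ) (y : Lam l) :
    pd a (ExteriorAlgebra.ι ℂ v * y) = v a • y - ExteriorAlgebra.ι ℂ v * pd a y := by
  rw [ivsum (l := l) v, Finset.sum_mul, map_sum]
  have : ∀ b, pd a ((v b • gen l b) * y) =
      (if b = a then v a • y else 0) - (v b • gen l b) * pd a y := by
    intro b
    rw [smul_mul_assoc, map_smul, leib hpd, smul_sub, smul_mul_assoc]
    congr 1
    by_cases hab : a = b
    · subst hab; simp
    · simp [hab, Ne.symm hab]
  simp only [this]
  rw [Finset.sum_sub_distrib, Finset.sum_ite_eq' Finset.univ a, ← Finset.sum_mul,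
    ← ivsum]
  simp

theorem anti (hpd : ∀ a, IsContraction l a (pd a)) (a b : Fin l ⊕ Fin l) (x : Lam l) :
    pd a (pd b x) + pd b (pd a x) = 0 := by
  induction x using CliffordAlgebra.left_induction with
  | algebraMap r =>
    have h1 : ∀ c, pd c ((algebraMap ℂ (Lam l)) r) = 0 := by
      intro c
      rw [Algebra.algebraMap_eq_smul_one, map_smul, (hpd c).1, smul_zero]
    simp [h1]
  | add x y hx hy =>
    simp only [map_add]
    rw [add_add_add_comm, hx, hy, add_zero]
  | ι_mul x m hx =>
    have e1 : pd a (pd b (ExteriorAlgebra.ι ℂ m * x)) =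
        m b • pd a x - (m a • pd b x - ExteriorAlgebra.ι ℂ m * pd a (pd b x)) := by
      rw [leibv hpd b, map_sub, map_smul, leibv hpd a]
    have e2 : pd b (pd a (ExteriorAlgebra.ι ℂ m * x)) =
        m a • pd b x - (m b • pd a x - ExteriorAlgebra.ι ℂ m * pd b (pd a x)) := by
      rw [leibv hpd a, map_sub, map_smul, leibv hpd b]
    have key : ExteriorAlgebra.ι ℂ m * pd a (pd b x) +
        ExteriorAlgebra.ι ℂ m * pd b (pd a x) = 0 := by
      rw [← mul_add, hx, mul_zero]
    show pd a (pd b ((ExteriorAlgebra.ι ℂ) m * x)) + pd b (pd a ((ExteriorAlgebra.ι ℂ) m * x)) = 0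
    rw [e1, e2, ← key]
    abel

theorem gen_swap (a b : Fin l ⊕ Fin l) : gen l a * gen l b = -(gen l b * gen l a) :=
  eq_neg_of_add_eq_zero_left (ExteriorAlgebra.ι_add_mul_swap _ _)

theorem comm_key (hpd : ∀ a, IsContraction l a (pd a)) (p q r s t : Fin l ⊕ Fin l)
    (hqr : q ≠ r) (hqs : q ≠ s) (htp : t ≠ p) :
    (Lmul l (gen l p) ∘ₗ pd q) ∘ₗ (Lmul l (gen l r * gen l s) ∘ₗ pd t)
      - (Lmul l (gen l r * gen l s) ∘ₗ pd t) ∘ₗ (Lmul l (gen l p) ∘ₗ pd q) = 0 := by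
  apply LinearMap.ext
  intro x
  simp only [LinearMap.sub_apply, LinearMap.comp_apply, Lmul, LinearMap.mulLeft_apply,
    LinearMap.zero_apply, mul_assoc]
  have h1 : pd q (gen l r * (gen l s * pd t x)) = gen l r * (gen l s * pd q (pd t x)) := by
    rw [leib hpd, if_neg hqr, leib hpd, if_neg hqs]
    simp [mul_sub]
  have h2 : pd t (gen l p * pd q x) = -(gen l p * pd t (pd q x)) := by
    rw [leib hpd, if_neg htp]
    simp
  rw [h1, h2]
  have hperm : gen l r * gen l s * gen l p = gen l p * gen l r * gen l s := by
    rw [mul_assoc, gen_swap s p, mul_neg, ← mul_assoc, gen_swap r p, neg_mul, neg_neg,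
      mul_assoc]
  have h3 : gen l r * (gen l s * -(gen l p * pd t (pd q x)))
      = -(gen l p * (gen l r * (gen l s * pd t (pd q x)))) := by
    simp only [mul_neg, neg_mul, ← mul_assoc]
    rw [hperm]
  rw [h3, sub_neg_eq_add, ← mul_add, ← mul_add, ← mul_add, anti hpd q t x]
  simp

theorem Lmul_zero : Lmul l (0 : Lam l) = 0 := by
  apply LinearMap.ext; intro x; simp [Lmul]

theorem Lmul_neg (g : Lam l) : Lmul l (-g) = -(Lmul l g) := by
  apply LinearMap.ext; intro x; simp [Lmul]

theorem ham_pair (hpd : ∀ a, IsContraction l a (pd a)) (i1 i2 : Fin l) :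
    Ham l pd (gen l (Sum.inr i1) * gen l (Sum.inl i2)) =
      Lmul l (gen l (Sum.inl i2)) ∘ₗ pd (Sum.inl i1)
        - Lmul l (gen l (Sum.inr i1)) ∘ₗ pd (Sum.inr i2) := by
  have hA : ∀ j : Fin l, pd (Sum.inl j) (gen l (Sum.inr i1) * gen l (Sum.inl i2)) =
      if j = i2 then -gen l (Sum.inr i1) else 0 := by
    intro j
    rw [leib hpd, (hpd _).2.1]
    by_cases h : j = i2 <;> simp [h]
  have hB : ∀ j : Fin l, pd (Sum.inr j) (gen l (Sum.inr i1) * gen l (Sum.inl i2)) =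
      if j = i1 then gen l (Sum.inl i2) else 0 := by
    intro j
    rw [leib hpd, (hpd _).2.1]
    by_cases h : j = i1 <;> simp [h]
  have hsum : ∀ j : Fin l,
      (Lmul l (pd (Sum.inl j) (gen l (Sum.inr i1) * gen l (Sum.inl i2))) ∘ₗ pd (Sum.inr j) +
       Lmul l (pd (Sum.inr j) (gen l (Sum.inr i1) * gen l (Sum.inl i2))) ∘ₗ pd (Sum.inl j))
      = ((if j = i2 then -(Lmul l (gen l (Sum.inr i1)) ∘ₗ pd (Sum.inr i2)) else 0)
        + (if j = i1 then Lmul l (gen l (Sum.inl i2)) ∘ₗ pd (Sum.inl i1) else 0)) := by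
    intro j
    rw [hA j, hB j]
    by_cases h1 : j = i2 <;> by_cases h2 : j = i1
    · simp [h1, h2, h1.symm.trans h2, Lmul_zero, Lmul_neg]
    · have hne : i2 ≠ i1 := fun h => h2 (h1.trans h)
      simp [h1, h2, hne, Lmul_zero, Lmul_neg]
    · have hne : i1 ≠ i2 := fun h => h1 (h2.trans h)
      simp [h1, h2, hne, Lmul_zero, Lmul_neg]
    · simp [h1, h2, Lmul_zero, Lmul_neg]
  unfold Ham
  rw [Finset.sum_congr rfl fun j _ => hsum j, Finset.sum_add_distrib,
    Finset.sum_ite_eq' Finset.univ i2, Finset.sum_ite_eq' Finset.univ i1]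
  simp only [Finset.mem_univ, if_true]
  abel

theorem comm_E (hpd : ∀ a, IsContraction l a (pd a)) (i1 i2 : Fin l) (r s t : Fin l)
    (h1 : i2 ≠ r) (h2 : i2 ≠ s) (h3 : t ≠ i2) :
    (Lmul l (gen l (Sum.inl i2)) ∘ₗ pd (Sum.inl i1)
      - Lmul l (gen l (Sum.inr i1)) ∘ₗ pd (Sum.inr i2)) ∘ₗ
        (Lmul l (gen l (Sum.inr r) * gen l (Sum.inr s)) ∘ₗ pd (Sum.inl t))
    - (Lmul l (gen l (Sum.inr r) * gen l (Sum.inr s)) ∘ₗ pd (Sum.inl t)) ∘ₗ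
        (Lmul l (gen l (Sum.inl i2)) ∘ₗ pd (Sum.inl i1)
          - Lmul l (gen l (Sum.inr i1)) ∘ₗ pd (Sum.inr i2)) = 0 := by
  have k1 := comm_key hpd (Sum.inl i2) (Sum.inl i1) (Sum.inr r) (Sum.inr s) (Sum.inl t)
    (by simp) (by simp) (by simp [h3])
  have k2 := comm_key hpd (Sum.inr i1) (Sum.inr i2) (Sum.inr r) (Sum.inr s) (Sum.inl t)
    (by simp [h1]) (by simp [h2]) (by simp)
  rw [LinearMap.sub_comp, LinearMap.comp_sub]
  rw [sub_eq_zero] at k1 k2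
  rw [k1, k2]
  abel

set_option maxHeartbeats 2000000 in
theorem comm_D (hpd : ∀ a, IsContraction l a (pd a)) (hl : 5 ≤ l) (i1 i2 : Fin l)
    (hv0 : (i2 : ℕ) ≠ 0) (hv1 : (i2 : ℕ) ≠ 1) (hv2 : (i2 : ℕ) ≠ 2) :
    (Lmul l (gen l (Sum.inl i2)) ∘ₗ pd (Sum.inl i1)
        - Lmul l (gen l (Sum.inr i1)) ∘ₗ pd (Sum.inr i2)) ∘ₗ
      Ham l pd (gen l (Sum.inr ⟨0, (by omega : 0 + 0 < l)⟩) * gen l (Sum.inr ⟨1, (by omega : 0 + 1 < l)⟩) *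
        gen l (Sum.inr ⟨2, (by omega : 0 + 2 < l)⟩))
    - Ham l pd (gen l (Sum.inr ⟨0, (by omega : 0 + 0 < l)⟩) * gen l (Sum.inr ⟨1, (by omega : 0 + 1 < l)⟩) *
        gen l (Sum.inr ⟨2, (by omega : 0 + 2 < l)⟩)) ∘ₗ
      (Lmul l (gen l (Sum.inl i2)) ∘ₗ pd (Sum.inl i1)
        - Lmul l (gen l (Sum.inr i1)) ∘ₗ pd (Sum.inr i2)) = 0 := by
  set e0 : Fin l := ⟨0, by omega⟩ with he0
  set e1 : Fin l := ⟨1, by omega⟩ with he1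
  set e2 : Fin l := ⟨2, by omega⟩ with he2
  have ne01 : e0 ≠ e1 := by rw [he0, he1]; exact Fin.ne_of_val_ne (by norm_num)
  have ne02 : e0 ≠ e2 := by rw [he0, he2]; exact Fin.ne_of_val_ne (by norm_num)
  have ne12 : e1 ≠ e2 := by rw [he1, he2]; exact Fin.ne_of_val_ne (by norm_num)
  have ni0 : i2 ≠ e0 := by rw [he0]; exact Fin.ne_of_val_ne hv0
  have ni1 : i2 ≠ e1 := by rw [he1]; exact Fin.ne_of_val_ne hv1
  have ni2 : i2 ≠ e2 := by rw [he2]; exact Fin.ne_of_val_ne hv2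
  set E : Module.End ℂ (Lam l) := Lmul l (gen l (Sum.inl i2)) ∘ₗ pd (Sum.inl i1)
    - Lmul l (gen l (Sum.inr i1)) ∘ₗ pd (Sum.inr i2) with hE
  set f0 : Lam l := gen l (Sum.inr e0) * gen l (Sum.inr e1) * gen l (Sum.inr e2) with hf0
  have hC : ∀ a, pd a f0 =
      (if a = Sum.inr e0 then gen l (Sum.inr e1) * gen l (Sum.inr e2) else 0)
      - gen l (Sum.inr e0) * ((if a = Sum.inr e1 then gen l (Sum.inr e2) else 0)
        - gen l (Sum.inr e1) * (if a = Sum.inr e2 then 1 else 0)) := by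
    intro a
    rw [hf0, mul_assoc, leib hpd, leib hpd, (hpd a).2.1]
  have hCl : ∀ j : Fin l, pd (Sum.inl j) f0 = 0 := by
    intro j; rw [hC]; simp
  unfold Ham
  rw [← Module.End.mul_eq_comp E, ← Module.End.mul_eq_comp _ E, Finset.mul_sum,
    Finset.sum_mul, ← Finset.sum_sub_distrib]
  apply Finset.sum_eq_zero
  intro j _
  rw [hCl j, Lmul_zero, LinearMap.zero_comp, zero_add, Module.End.mul_eq_comp,
    Module.End.mul_eq_comp]
  by_cases h0 : j = e0
  · have hg : pd (Sum.inr j) f0 = gen l (Sum.inr e1) * gen l (Sum.inr e2) := by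
      rw [hC]
      simp [Sum.inr.injEq, h0, ne01, ne02]
    rw [hg, h0, hE]
    exact comm_E hpd i1 i2 e1 e2 e0 ni1 ni2 (Ne.symm ni0)
  · by_cases h1 : j = e1
    · have hg : pd (Sum.inr j) f0 = -(gen l (Sum.inr e0) * gen l (Sum.inr e2)) := by
        rw [hC]
        simp [Sum.inr.injEq, h1, Ne.symm ne01, ne12]
      rw [hg, h1, Lmul_neg, LinearMap.neg_comp, LinearMap.comp_neg, LinearMap.neg_comp, hE]
      have k := comm_E hpd i1 i2 e0 e2 e1 ni0 ni2 (Ne.symm ni1)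
      rw [sub_eq_zero] at k
      rw [k]
      abel
    · by_cases h2 : j = e2
      · have hg : pd (Sum.inr j) f0 = gen l (Sum.inr e0) * gen l (Sum.inr e1) := by
          rw [hC]
          simp [Sum.inr.injEq, h2, Ne.symm ne02, Ne.symm ne12]
        rw [hg, h2, hE]
        exact comm_E hpd i1 i2 e0 e1 e2 ni0 ni1 (Ne.symm ni2)
      · have hg : pd (Sum.inr j) f0 = 0 := by
          rw [hC]
          simp [Sum.inr.injEq, h0, h1, h2]
        rw [hg, Lmul_zero, LinearMap.zero_comp]
        simp

/-- for l ≥ 5 and every i with 3 < i ≤ l−1, the even operator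
H_{ηᵢξᵢ₊₁} = L_{ξᵢ₊₁}∘∂_{ξᵢ} − L_{ηᵢ}∘∂_{ηᵢ₊₁} commutes with the odd operator
H_{η₁η₂η₃}, realizing the relations {ξᵢηᵢ₊₁, η₁η₂η₃} = 0 for i > 3 of §2.1.2.
(Indices 0-based: ηᵢ ↦ i−1, ξᵢ₊₁ ↦ i.) -/
theorem ham_Chevalley_Y_relations_high (l : ℕ) (hl : 5 ≤ l)
    (pd : (Fin l ⊕ Fin l) → Module.End ℂ (Lam l))
    (hpd : ∀ a, IsContraction l a (pd a))
    (D : Module.End ℂ (Lam l))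
    (hD : D = Ham l pd (etav l ⟨0, by omega⟩ * etav l ⟨1, by omega⟩ * etav l ⟨2, by omega⟩)) :
    ∀ (i : ℕ) (h1 : 3 < i) (h2 : i ≤ l - 1),
      Ham l pd (etav l ⟨i - 1, by omega⟩ * xiv l ⟨i, by omega⟩) =
        Lmul l (xiv l ⟨i, by omega⟩) ∘ₗ pd (Sum.inl ⟨i - 1, by omega⟩)
          - Lmul l (etav l ⟨i - 1, by omega⟩) ∘ₗ pd (Sum.inr ⟨i, by omega⟩) ∧
      Ham l pd (etav l ⟨i - 1, by omega⟩ * xiv l ⟨i, by omega⟩) ∘ₗ D -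
        D ∘ₗ Ham l pd (etav l ⟨i - 1, by omega⟩ * xiv l ⟨i, by omega⟩) = 0 := by
  intro i h1 h2
  have c1 : Ham l pd (etav l ⟨i - 1, by omega⟩ * xiv l ⟨i, by omega⟩) =
      Lmul l (xiv l ⟨i, by omega⟩) ∘ₗ pd (Sum.inl ⟨i - 1, by omega⟩)
        - Lmul l (etav l ⟨i - 1, by omega⟩) ∘ₗ pd (Sum.inr ⟨i, by omega⟩) :=
    ham_pair hpd ⟨i - 1, by omega⟩ ⟨i, by omega⟩
  refine ⟨c1, ?_⟩
  rw [hD, c1]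
  exact comm_D hpd hl ⟨i - 1, by omega⟩ ⟨i, by omega⟩
    (show i ≠ 0 by omega) (show i ≠ 1 by omega) (show i ≠ 2 by omega)
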